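/- Let V₁, V₂ : ℝ × ℝ → ℝ be twice continuously differentiable functions such that ∂²V₁/∂a₁∂a₂ = ∂²V₂/∂a₂∂a₁ everywhere. Define Φ : ℝ × ℝ → ℝ by Φ(a₁, a₂) = ∫₀¹ ( ∂₁V₁(r a₁, r a₂) · a₁ + ∂₂V₂(r a₁, r a₂) · a₂ ) dr. Then Φ is an exact potential for the two-player game: for all a₁, a₁', a₂ ∈ ℝ, V₁(a₁', a₂) − V₁(a₁, a₂) = Φ(a₁', a₂) − Φ(a₁, a₂), and symmetrically for player 2. -/

import Mathlib

open intervalIntegral MeasureTheory Metric Set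

/-- Derivative along the first coordinate. -/
lemma aux_hasDerivAt_fst (f : ℝ × ℝ → ℝ) (hf : Differentiable ℝ f) (x y : ℝ) :
    HasDerivAt (fun t => f (t, y)) (fderiv ℝ f (x, y) (1, 0)) x :=
  (hf (x, y)).hasFDerivAt.comp_hasDerivAt x ((hasDerivAt_id x).prodMk (hasDerivAt_const x y))

/-- Derivative along the second coordinate. -/
lemma aux_hasDerivAt_snd (f : ℝ × ℝ → ℝ) (hf : Differentiable ℝ f) (x y : ℝ) :
    HasDerivAt (fun t => f (x, t)) (fderiv ℝ f (x, y) (0, 1)) y :=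
  (hf (x, y)).hasFDerivAt.comp_hasDerivAt y ((hasDerivAt_const y x).prodMk (hasDerivAt_id y))

/-- Key lemma: line integral of a closed 1-form is an exact potential in the first variable. -/
lemma key (P Q : ℝ × ℝ → ℝ) (hP : ContDiff ℝ 1 P) (hQ : ContDiff ℝ 1 Q)
    (hm : ∀ a : ℝ × ℝ, fderiv ℝ P a (0, 1) = fderiv ℝ Q a (1, 0))
    (c s₀ s₁ : ℝ) :
    (∫ r in (0:ℝ)..1, (P (r * s₁, r * c) * s₁ + Q (r * s₁, r * c) * c))
      - ∫ r in (0:ℝ)..1, (P (r * s₀, r * c) * s₀ + Q (r * s₀, r * c) * c)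
      = ∫ t in s₀..s₁, P (t, c) := by
  have hPd : Differentiable ℝ P := hP.differentiable one_ne_zero
  have hQd : Differentiable ℝ Q := hQ.differentiable one_ne_zero
  have hPc : Continuous P := hP.continuous
  have hQc : Continuous Q := hQ.continuous
  have hPf : Continuous (fderiv ℝ P) := hP.continuous_fderiv one_ne_zero
  set F : ℝ → ℝ → ℝ := fun x r => P (r * x, r * c) * x + Q (r * x, r * c) * c with hF
  set F' : ℝ → ℝ → ℝ := fun x r => P (r * x, r * c) + r * (fderiv ℝ P (r * x, r * c)) (x, c)
    with hF'
  -- linearity decomposition of fderiv P applied to vectors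
  have hlin : ∀ (b : ℝ × ℝ) (u v : ℝ),
      (fderiv ℝ P b) (u, v) = u * (fderiv ℝ P b) (1, 0) + v * (fderiv ℝ P b) (0, 1) := by
    intro b u v
    have : ((u : ℝ), v) = u • ((1 : ℝ), (0 : ℝ)) + v • ((0 : ℝ), (1 : ℝ)) := by
      simp [Prod.ext_iff]
    rw [this, map_add, ContinuousLinearMap.map_smul, ContinuousLinearMap.map_smul,
      smul_eq_mul, smul_eq_mul]
  have hlinQ : ∀ (b : ℝ × ℝ) (u v : ℝ),
      (fderiv ℝ Q b) (u, v) = u * (fderiv ℝ Q b) (1, 0) + v * (fderiv ℝ Q b) (0, 1) := by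
    intro b u v
    have : ((u : ℝ), v) = u • ((1 : ℝ), (0 : ℝ)) + v • ((0 : ℝ), (1 : ℝ)) := by
      simp [Prod.ext_iff]
    rw [this, map_add, ContinuousLinearMap.map_smul, ContinuousLinearMap.map_smul,
      smul_eq_mul, smul_eq_mul]
  -- sublemma A: radial derivative
  have subA : ∀ (x r : ℝ), HasDerivAt (fun r => r * P (r * x, r * c)) (F' x r) r := by
    intro x r
    have h1 : HasDerivAt (fun r : ℝ => (r * x, r * c)) (x, c) r :=
      (hasDerivAt_mul_const x).prodMk (hasDerivAt_mul_const c)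
    have h2 : HasDerivAt (fun r => P (r * x, r * c))
        ((fderiv ℝ P (r * x, r * c)) (x, c)) r :=
      (hPd (r * x, r * c)).hasFDerivAt.comp_hasDerivAt r h1
    have := (hasDerivAt_id' r).mul h2
    simpa [F'] using (show HasDerivAt (fun r => r * P (r * x, r * c)) _ r from this)
  -- sublemma B: parameter derivative
  have subB : ∀ (r x : ℝ), HasDerivAt (fun x => F x r) (F' x r) x := by
    intro r x
    have hx : HasDerivAt (fun x : ℝ => (r * x, r * c)) (r, 0) x := by
      have : HasDerivAt (fun x : ℝ => (r * x, r * c)) (r * 1, 0) x :=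
        ((hasDerivAt_id x).const_mul r).prodMk (hasDerivAt_const x (r * c))
      simpa using this
    have hPx : HasDerivAt (fun x => P (r * x, r * c))
        ((fderiv ℝ P (r * x, r * c)) (r, 0)) x :=
      (hPd (r * x, r * c)).hasFDerivAt.comp_hasDerivAt x hx
    have hQx : HasDerivAt (fun x => Q (r * x, r * c))
        ((fderiv ℝ Q (r * x, r * c)) (r, 0)) x :=
      (hQd (r * x, r * c)).hasFDerivAt.comp_hasDerivAt x hx
    have hsum := (hPx.mul (hasDerivAt_id x)).add (hQx.mul_const c)
    convert hsum using 1
    · rfl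
    · rfl
    · rfl
    have e1 := hlin (r * x, r * c) r 0
    have e2 := hlinQ (r * x, r * c) r 0
    have e3 := hlin (r * x, r * c) x c
    have e4 := hm (r * x, r * c)
    simp only [F', id_eq]
    rw [e1, e2, e3, ← e4]
    ring
  -- continuity facts
  have hcurve : ∀ x : ℝ, Continuous fun r : ℝ => (r * x, r * c) := fun x =>
    (continuous_id.mul continuous_const).prodMk (continuous_id.mul continuous_const)
  have contF : ∀ x : ℝ, Continuous fun r => F x r := by
    intro x
    exact ((hPc.comp (hcurve x)).mul continuous_const).add
      ((hQc.comp (hcurve x)).mul continuous_const)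
  have contF' : ∀ x : ℝ, Continuous fun r => F' x r := by
    intro x
    exact (hPc.comp (hcurve x)).add
      (continuous_id.mul (((hPf.comp (hcurve x)).clm_apply continuous_const)))
  -- step 1 : derivative of G
  have step : ∀ s : ℝ, HasDerivAt (fun s => ∫ r in (0:ℝ)..1, F s r) (P (s, c)) s := by
    intro s
    -- joint continuity of F'
    have contJ : Continuous fun p : ℝ × ℝ => F' p.1 p.2 := by
      have hc2 : Continuous fun p : ℝ × ℝ => (p.2 * p.1, p.2 * c) :=
        (continuous_snd.mul continuous_fst).prodMk (continuous_snd.mul continuous_const)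
      exact (hPc.comp hc2).add
        (continuous_snd.mul ((hPf.comp hc2).clm_apply (continuous_fst.prodMk continuous_const)))
    obtain ⟨C, hC⟩ := ((isCompact_closedBall s 1).prod isCompact_Icc).exists_bound_of_continuousOn
      (f := fun p : ℝ × ℝ => F' p.1 p.2) contJ.continuousOn
    have main := intervalIntegral.hasDerivAt_integral_of_dominated_loc_of_deriv_le
      (F := F) (F' := F') (x₀ := s) (a := 0) (b := 1) (bound := fun _ => C)
      (μ := volume) (ball_mem_nhds s one_pos)
      (Filter.Eventually.of_forall fun x => (contF x).aestronglyMeasurable)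
      ((contF s).intervalIntegrable _ _)
      (contF' s).aestronglyMeasurable
      (Filter.Eventually.of_forall fun r hr x hx => by
        refine hC (x, r) ⟨ball_subset_closedBall hx, ?_⟩
        have : r ∈ Set.Ioc (0:ℝ) 1 := by
          simpa [Set.uIoc_of_le (by norm_num : (0:ℝ) ≤ 1)] using hr
        exact ⟨this.1.le, this.2⟩)
      (intervalIntegrable_const)
      (Filter.Eventually.of_forall fun r hr x hx => subB r x)
    have hval : (∫ r in (0:ℝ)..1, F' s r) = P (s, c) := by
      have := intervalIntegral.integral_eq_sub_of_hasDerivAt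
        (f := fun r => r * P (r * s, r * c)) (f' := fun r => F' s r)
        (fun r hr => subA s r) ((contF' s).intervalIntegrable 0 1)
      simpa using this
    rw [hval] at main
    exact main.2
  -- step 2 : FTC
  have := intervalIntegral.integral_eq_sub_of_hasDerivAt
    (f := fun s => ∫ r in (0:ℝ)..1, F s r) (f' := fun t => P (t, c))
    (fun t _ => step t)
    ((hPc.comp (continuous_id.prodMk continuous_const)).intervalIntegrable s₀ s₁)
  rw [this]

/-- Symmetric mixed second derivatives imply the line-integral Φ is an exact
potential for the two-player game. -/
theorem symmetric_second_derivatives_exact_potential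
    (V₁ V₂ : ℝ × ℝ → ℝ)
    (hV₁ : ContDiff ℝ 2 V₁) (hV₂ : ContDiff ℝ 2 V₂)
    (hmix : ∀ a : ℝ × ℝ,
      deriv (fun y => deriv (fun x => V₁ (x, y)) a.1) a.2
        = deriv (fun x => deriv (fun y => V₂ (x, y)) a.2) a.1)
    (Φ : ℝ × ℝ → ℝ)
    (hΦ : ∀ a₁ a₂ : ℝ, Φ (a₁, a₂) =
      ∫ r in (0:ℝ)..1,
        (deriv (fun x => V₁ (x, r * a₂)) (r * a₁) * a₁
          + deriv (fun y => V₂ (r * a₁, y)) (r * a₂) * a₂)) :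
    (∀ a₁ a₁' a₂ : ℝ,
        V₁ (a₁', a₂) - V₁ (a₁, a₂) = Φ (a₁', a₂) - Φ (a₁, a₂)) ∧
    (∀ a₁ a₂ a₂' : ℝ,
        V₂ (a₁, a₂') - V₂ (a₁, a₂) = Φ (a₁, a₂') - Φ (a₁, a₂)) := by
  have hV₁d : Differentiable ℝ V₁ := hV₁.differentiable (by norm_num)
  have hV₂d : Differentiable ℝ V₂ := hV₂.differentiable (by norm_num)
  set D₁ : ℝ × ℝ → ℝ := fun a => fderiv ℝ V₁ a (1, 0) with hD₁def
  set D₂ : ℝ × ℝ → ℝ := fun a => fderiv ℝ V₂ a (0, 1) with hD₂def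
  have hD₁ : ContDiff ℝ 1 D₁ :=
    (hV₁.fderiv_right (by norm_num)).clm_apply contDiff_const
  have hD₂ : ContDiff ℝ 1 D₂ :=
    (hV₂.fderiv_right (by norm_num)).clm_apply contDiff_const
  have hd₁ : ∀ x y : ℝ, HasDerivAt (fun t => V₁ (t, y)) (D₁ (x, y)) x :=
    fun x y => aux_hasDerivAt_fst V₁ hV₁d x y
  have hd₂ : ∀ x y : ℝ, HasDerivAt (fun t => V₂ (x, t)) (D₂ (x, y)) y :=
    fun x y => aux_hasDerivAt_snd V₂ hV₂d x y
  -- translate hmix into fderiv form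
  have hm : ∀ b : ℝ × ℝ, fderiv ℝ D₁ b (0, 1) = fderiv ℝ D₂ b (1, 0) := by
    intro b
    have h := hmix b
    have e₁ : (fun y => deriv (fun x => V₁ (x, y)) b.1) = fun y => D₁ (b.1, y) := by
      funext y; exact (hd₁ b.1 y).deriv
    have e₂ : (fun x => deriv (fun y => V₂ (x, y)) b.2) = fun x => D₂ (x, b.2) := by
      funext x; exact (hd₂ x b.2).deriv
    rw [e₁, e₂] at h
    have g₁ : deriv (fun y => D₁ (b.1, y)) b.2 = fderiv ℝ D₁ b (0, 1) := by
      have := aux_hasDerivAt_snd D₁ (hD₁.differentiable one_ne_zero) b.1 b.2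
      simpa using this.deriv
    have g₂ : deriv (fun x => D₂ (x, b.2)) b.1 = fderiv ℝ D₂ b (1, 0) := by
      have := aux_hasDerivAt_fst D₂ (hD₂.differentiable one_ne_zero) b.1 b.2
      simpa using this.deriv
    rw [g₁, g₂] at h
    exact h
  constructor
  · intro a₁ a₁' a₂
    have hrw : ∀ s : ℝ, Φ (s, a₂)
        = ∫ r in (0:ℝ)..1, (D₁ (r * s, r * a₂) * s + D₂ (r * s, r * a₂) * a₂) := by
      intro s
      rw [hΦ s a₂]
      congr 1
      funext r
      rw [(hd₁ (r * s) (r * a₂)).deriv, (hd₂ (r * s) (r * a₂)).deriv]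
    have hkey := key D₁ D₂ hD₁ hD₂ hm a₂ a₁ a₁'
    rw [← hrw, ← hrw] at hkey
    rw [hkey]
    exact (intervalIntegral.integral_eq_sub_of_hasDerivAt
      (f := fun t => V₁ (t, a₂)) (f' := fun t => D₁ (t, a₂))
      (fun t _ => hd₁ t a₂)
      ((hD₁.continuous.comp (continuous_id.prodMk continuous_const)).intervalIntegrable
        a₁ a₁')).symm
  · intro a₁ a₂ a₂'
    -- swapped versions
    set σ : ℝ × ℝ →L[ℝ] ℝ × ℝ :=
      (ContinuousLinearMap.snd ℝ ℝ ℝ).prod (ContinuousLinearMap.fst ℝ ℝ ℝ) with hσdef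
    have hσ : ∀ a : ℝ × ℝ, HasFDerivAt (fun p : ℝ × ℝ => ((p.2 : ℝ), (p.1 : ℝ))) σ a := by
      intro a
      exact σ.hasFDerivAt
    set P : ℝ × ℝ → ℝ := fun p => D₂ (p.2, p.1) with hPdef
    set Q : ℝ × ℝ → ℝ := fun p => D₁ (p.2, p.1) with hQdef
    have hswap : ContDiff ℝ 1 (fun p : ℝ × ℝ => ((p.2 : ℝ), (p.1 : ℝ))) :=
      contDiff_snd.prodMk contDiff_fst
    have hP : ContDiff ℝ 1 P := hD₂.comp hswap
    have hQ : ContDiff ℝ 1 Q := hD₁.comp hswap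
    have hm' : ∀ a : ℝ × ℝ, fderiv ℝ P a (0, 1) = fderiv ℝ Q a (1, 0) := by
      intro a
      have hPa : fderiv ℝ P a = (fderiv ℝ D₂ (a.2, a.1)).comp σ :=
        by have := (((hD₂.differentiable one_ne_zero) (a.2, a.1)).hasFDerivAt.comp a (hσ a)).fderiv; exact this
      have hQa : fderiv ℝ Q a = (fderiv ℝ D₁ (a.2, a.1)).comp σ :=
        by have := (((hD₁.differentiable one_ne_zero) (a.2, a.1)).hasFDerivAt.comp a (hσ a)).fderiv; exact this
      rw [hPa, hQa]
      simp only [ContinuousLinearMap.comp_apply, hσdef]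
      have hσ01 : σ ((0:ℝ), (1:ℝ)) = (1, 0) := by simp [hσdef]
      have hσ10 : σ ((1:ℝ), (0:ℝ)) = (0, 1) := by simp [hσdef]
      rw [hσ01, hσ10]
      exact (hm (a.2, a.1)).symm
    have hrw : ∀ s : ℝ, Φ (a₁, s)
        = ∫ r in (0:ℝ)..1, (P (r * s, r * a₁) * s + Q (r * s, r * a₁) * a₁) := by
      intro s
      rw [hΦ a₁ s]
      congr 1
      funext r
      rw [(hd₁ (r * a₁) (r * s)).deriv, (hd₂ (r * a₁) (r * s)).deriv]
      simp only [P, Q]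
      ring
    have hkey := key P Q hP hQ hm' a₁ a₂ a₂'
    rw [← hrw, ← hrw] at hkey
    rw [hkey]
    have hPc : Continuous fun t : ℝ => P (t, a₁) :=
      hP.continuous.comp (continuous_id.prodMk continuous_const)
    exact (intervalIntegral.integral_eq_sub_of_hasDerivAt
      (f := fun t => V₂ (a₁, t)) (f' := fun t => P (t, a₁))
      (fun t _ => hd₂ a₁ t)
      (hPc.intervalIntegrable a₂ a₂')).symm
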